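/- The standard cluster T₀ is a maximal noncrossing set: if a pair {x,y} of distinct points of S¹ = ℝ/2πℤ (with x, y not adjacent, i.e., the pair is not a 'side' of any degenerate configuration) is noncrossing with every dyadic pair (mπ/2ⁿ, (m+1)π/2ⁿ) in T₀, then {x,y} is itself (the image of) such a dyadic pair (m'π/2^{n'}, (m'+1)π/2^{n'}). -/

import Mathlib

open Real

/-- `p` lies (modulo 2π) in the open arc from `a` to `b` (where `a < b ≤ a + 2π`). -/
def InOpenArc (a b p : ℝ) : Prop :=
  ∃ k : ℤ, a < p + 2 * π * k ∧ p + 2 * π * k < b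

/-- The chords with endpoint pairs {a,b} and {x,y} cross on the circle S¹ = ℝ/2πℤ. -/
def CrossesR (a b x y : ℝ) : Prop :=
  (InOpenArc a b x ∧ InOpenArc b (a + 2 * π) y) ∨
  (InOpenArc a b y ∧ InOpenArc b (a + 2 * π) x)

/-- `{x',y'}` represents the same unordered pair of points of S¹ = ℝ/2πℤ as `{x,y}`. -/
def SameChord (x y x' y' : ℝ) : Prop :=
  ((∃ m : ℤ, x' = x + 2 * π * m) ∧ (∃ n : ℤ, y' = y + 2 * π * n)) ∨
  ((∃ m : ℤ, x' = y + 2 * π * m) ∧ (∃ n : ℤ, y' = x + 2 * π * n))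

namespace Stmt10Aux

lemma glt (w : ℕ) {a b : ℝ} : a * π / 2 ^ w < b * π / 2 ^ w ↔ a < b := by
  rw [div_lt_div_iff_of_pos_right (by positivity : (0:ℝ) < 2 ^ w)]
  exact ⟨fun h => lt_of_mul_lt_mul_right h pi_pos.le, fun h => mul_lt_mul_of_pos_right h pi_pos⟩

lemma two_pi (w : ℕ) : (2:ℝ) * π = (2 ^ (w+1) : ℝ) * π / 2 ^ w := by
  rw [pow_succ]
  field_simp

lemma halve (v : ℕ) (p : ℤ) : ((2 * p : ℤ) : ℝ) * π / 2 ^ (v+1) = (p : ℝ) * π / 2 ^ v := by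
  push_cast
  rw [pow_succ]
  field_simp

lemma lift (n u : ℕ) (hnu : n ≤ u) (p : ℤ) :
    (p : ℝ) * π / 2 ^ n = ((p * 2 ^ (u - n) : ℤ) : ℝ) * π / 2 ^ u := by
  obtain ⟨k, rfl⟩ : ∃ k, u = n + k := ⟨u - n, by omega⟩
  have hk : n + k - n = k := by omega
  rw [hk]
  push_cast
  rw [pow_add]
  field_simp

lemma reduce (u : ℕ) (r : ℤ) :
    ∃ (m₀ : ℕ) (j : ℤ), m₀ < 2 ^ (u+1) ∧
      (m₀ : ℝ) * π / 2 ^ u = (r : ℝ) * π / 2 ^ u - 2 * π * j := by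
  have hb : (0:ℤ) < 2 ^ (u+1) := by positivity
  refine ⟨(r % 2 ^ (u+1)).toNat, r / 2 ^ (u+1), ?_, ?_⟩
  · have h0 : 0 ≤ r % 2 ^ (u+1) := Int.emod_nonneg r (ne_of_gt hb)
    have hlt : r % 2 ^ (u+1) < 2 ^ (u+1) := Int.emod_lt_of_pos r hb
    have : ((2 ^ (u+1) : ℕ) : ℤ) = 2 ^ (u+1) := by push_cast; ring
    omega
  · have h0 : 0 ≤ r % 2 ^ (u+1) := Int.emod_nonneg r (ne_of_gt hb)
    have hsum : 2 ^ (u+1) * (r / 2 ^ (u+1)) + r % 2 ^ (u+1) = r := Int.mul_ediv_add_emod r _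
    have hcast : ((r % 2 ^ (u+1)).toNat : ℝ) = (r:ℝ) - 2 ^ (u+1) * (r / 2 ^ (u+1) : ℤ) := by
      have h1 : ((r % 2 ^ (u+1)).toNat : ℝ) = (((r % 2 ^ (u+1)).toNat : ℤ) : ℝ) := by
        push_cast; ring
      rw [h1, Int.toNat_of_nonneg h0]
      have hsumR : (2:ℝ)^(u+1) * ((r / 2^(u+1) : ℤ):ℝ) + ((r % 2^(u+1) : ℤ):ℝ) = (r:ℝ) := by
        exact_mod_cast congrArg (Int.cast : ℤ → ℝ) hsum
      linarith [hsumR]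
    rw [hcast, pow_succ]
    field_simp

lemma shift_iff (a b z : ℝ) (t : ℤ) : InOpenArc a b (z + 2*π*t) ↔ InOpenArc a b z := by
  constructor
  · rintro ⟨k, h1, h2⟩
    exact ⟨t + k, by push_cast at h1 ⊢; linarith, by push_cast at h2 ⊢; linarith⟩
  · rintro ⟨k, h1, h2⟩
    exact ⟨k - t, by push_cast at h1 ⊢; linarith, by push_cast at h2 ⊢; linarith⟩

lemma crossesR_comm {a b x y : ℝ} (h : CrossesR a b x y) : CrossesR a b y x := by
  unfold CrossesR at h ⊢; tauto

lemma crossesR_shift {a b x y : ℝ} (s t : ℤ) (h : CrossesR a b (x + 2*π*s) (y + 2*π*t)) :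
    CrossesR a b x y := by
  unfold CrossesR at h ⊢
  rcases h with ⟨h1, h2⟩ | ⟨h1, h2⟩
  · exact Or.inl ⟨(shift_iff _ _ _ s).mp h1, (shift_iff _ _ _ t).mp h2⟩
  · exact Or.inr ⟨(shift_iff _ _ _ t).mp h1, (shift_iff _ _ _ s).mp h2⟩

lemma crosses_of (n : ℕ) (m : ℤ) (x y : ℝ)
    (h1 : (m:ℝ) * π / 2 ^ n < x) (h2 : x < ((m:ℝ)+1) * π / 2 ^ n)
    (h3 : ((m:ℝ)+1) * π / 2 ^ n < y) (h4 : y < (m:ℝ) * π / 2 ^ n + 2 * π) :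
    ∃ m₀ : ℕ, m₀ < 2 ^ (n+1) ∧ CrossesR ((m₀:ℝ) * π / 2 ^ n) (((m₀:ℝ)+1) * π / 2 ^ n) x y := by
  obtain ⟨m₀, j, hb, he⟩ := reduce n m
  have he2 : ((m₀:ℝ)+1) * π / 2 ^ n = ((m:ℝ)+1) * π / 2 ^ n - 2 * π * j := by
    linear_combination he
  refine ⟨m₀, hb, Or.inl ⟨⟨-j, ?_, ?_⟩, ⟨-j, ?_, ?_⟩⟩⟩
  · push_cast; linarith [he]
  · push_cast; linarith [he2]
  · push_cast; linarith [he2]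
  · push_cast; linarith [he]

lemma build (u : ℕ) (r : ℤ) (x y : ℝ)
    (hx : x = (r:ℝ) * π / 2 ^ u) (hy : y = ((r:ℝ)+1) * π / 2 ^ u) :
    ∃ n m : ℕ, m < 2 ^ (n + 1) ∧
      SameChord ((m : ℝ) * π / 2 ^ n) ((m + 1 : ℝ) * π / 2 ^ n) x y := by
  obtain ⟨m₀, j, hb, he⟩ := reduce u r
  refine ⟨u, m₀, hb, Or.inl ⟨⟨j, ?_⟩, ⟨j, ?_⟩⟩⟩
  · rw [hx]; push_cast; linear_combination -he
  · rw [hy]; push_cast; linear_combination -he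

lemma build2 (u : ℕ) (r : ℤ) (x y : ℝ)
    (hy : y = (r:ℝ) * π / 2 ^ u) (hx : x = ((r:ℝ)+1) * π / 2 ^ u - 2 * π) :
    ∃ n m : ℕ, m < 2 ^ (n + 1) ∧
      SameChord ((m : ℝ) * π / 2 ^ n) ((m + 1 : ℝ) * π / 2 ^ n) x y := by
  obtain ⟨m₀, j, hb, he⟩ := reduce u r
  refine ⟨u, m₀, hb, Or.inr ⟨⟨j - 1, ?_⟩, ⟨j, ?_⟩⟩⟩
  · rw [hx]; push_cast; linear_combination -he
  · rw [hy]; push_cast; linear_combination -he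

lemma exists_fine (d : ℝ) (hd : 0 < d) (hd2 : d < 2 * π) :
    ∃ n : ℕ, π / 2 ^ n < d ∧ π / 2 ^ n < 2 * π - d := by
  obtain ⟨n, hn⟩ : ∃ n : ℕ, max (π / d) (π / (2 * π - d)) < 2 ^ n :=
    pow_unbounded_of_one_lt _ one_lt_two
  have hd3 : 0 < 2 * π - d := by linarith
  have h2 : (0:ℝ) < 2 ^ n := by positivity
  have ha : π / d < 2 ^ n := lt_of_le_of_lt (le_max_left _ _) hn
  have hb : π / (2 * π - d) < 2 ^ n := lt_of_le_of_lt (le_max_right _ _) hn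
  rw [div_lt_iff₀ hd] at ha
  rw [div_lt_iff₀ hd3] at hb
  refine ⟨n, ?_, ?_⟩
  · rw [div_lt_iff₀ h2]; linarith
  · rw [div_lt_iff₀ h2]; linarith

lemma dyadic_x (x y : ℝ) (hxy : x < y) (hxy2 : y < x + 2 * π)
    (h : ∀ n m : ℕ, m < 2 ^ (n + 1) →
      ¬ CrossesR ((m : ℝ) * π / 2 ^ n) ((m + 1 : ℝ) * π / 2 ^ n) x y) :
    ∃ (n : ℕ) (m : ℤ), x = (m:ℝ) * π / 2 ^ n := by
  by_contra hc
  push_neg at hc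
  obtain ⟨n, hn1, hn2⟩ := exists_fine (y - x) (by linarith) (by linarith)
  have hp := pi_pos
  have h2 : (0:ℝ) < 2 ^ n := by positivity
  set m := ⌊x * 2 ^ n / π⌋ with hm
  have hle : (m:ℝ) * π / 2 ^ n ≤ x := by
    have := Int.floor_le (x * 2 ^ n / π)
    rw [le_div_iff₀ hp] at this
    rw [div_le_iff₀ h2]; linarith
  have hlt : (m:ℝ) * π / 2 ^ n < x :=
    lt_of_le_of_ne hle (fun he => hc n m he.symm)
  have hup : x < ((m:ℝ)+1) * π / 2 ^ n := by
    have := Int.lt_floor_add_one (x * 2 ^ n / π)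
    rw [div_lt_iff₀ hp] at this
    rw [lt_div_iff₀ h2]; linarith
  have hexp : ((m:ℝ)+1) * π / 2 ^ n = (m:ℝ) * π / 2 ^ n + π / 2 ^ n := by ring
  obtain ⟨m₀, hb, hcr⟩ := crosses_of n m x y hlt hup (by linarith) (by linarith)
  exact h n m₀ hb hcr

lemma dyadic_y (x y : ℝ) (hxy : x < y) (hxy2 : y < x + 2 * π)
    (h : ∀ n m : ℕ, m < 2 ^ (n + 1) →
      ¬ CrossesR ((m : ℝ) * π / 2 ^ n) ((m + 1 : ℝ) * π / 2 ^ n) x y) :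
    ∃ (n : ℕ) (m : ℤ), y = (m:ℝ) * π / 2 ^ n := by
  by_contra hc
  push_neg at hc
  obtain ⟨n, hn1, hn2⟩ := exists_fine (y - x) (by linarith) (by linarith)
  have hp := pi_pos
  have h2 : (0:ℝ) < 2 ^ n := by positivity
  set m := ⌊y * 2 ^ n / π⌋ with hm
  have hle : (m:ℝ) * π / 2 ^ n ≤ y := by
    have := Int.floor_le (y * 2 ^ n / π)
    rw [le_div_iff₀ hp] at this
    rw [div_le_iff₀ h2]; linarith
  have hlt : (m:ℝ) * π / 2 ^ n < y :=
    lt_of_le_of_ne hle (fun he => hc n m he.symm)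
  have hup : y < ((m:ℝ)+1) * π / 2 ^ n := by
    have := Int.lt_floor_add_one (y * 2 ^ n / π)
    rw [div_lt_iff₀ hp] at this
    rw [lt_div_iff₀ h2]; linarith
  have hexp : ((m:ℝ)+1) * π / 2 ^ n = (m:ℝ) * π / 2 ^ n + π / 2 ^ n := by ring
  obtain ⟨m₀, hb, hcr⟩ := crosses_of n m y (x + 2 * π)
    hlt hup (by linarith) (by linarith)
  have hcr2 : CrossesR ((m₀:ℝ) * π / 2 ^ n) (((m₀:ℝ)+1) * π / 2 ^ n) y x := by
    apply crossesR_shift 0 1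
    push_cast
    simpa using hcr
  exact h n m₀ hb (crossesR_comm hcr2)

lemma main_ind (x y : ℝ) (hxy : x < y) (hxy2 : y < x + 2 * π)
    (h : ∀ n m : ℕ, m < 2 ^ (n + 1) →
      ¬ CrossesR ((m : ℝ) * π / 2 ^ n) ((m + 1 : ℝ) * π / 2 ^ n) x y) :
    ∀ u : ℕ, ∀ p q : ℤ, x = (p:ℝ) * π / 2 ^ u → y = (q:ℝ) * π / 2 ^ u →
    ∃ n m : ℕ, m < 2 ^ (n + 1) ∧
      SameChord ((m : ℝ) * π / 2 ^ n) ((m + 1 : ℝ) * π / 2 ^ n) x y := by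
  intro u
  induction u with
  | zero =>
    intro p q hx hy
    have hlt : p < q := by
      have := hxy; rw [hx, hy] at this; exact_mod_cast (glt 0).mp this
    have hlt2 : q < p + 2 := by
      have h2 : y < ((p:ℝ) + 2 ^ (0+1)) * π / 2 ^ 0 := by
        rw [hx, two_pi 0] at hxy2
        calc y < (p:ℝ) * π / 2 ^ 0 + (2 ^ (0+1) : ℝ) * π / 2 ^ 0 := hxy2
        _ = ((p:ℝ) + 2 ^ (0+1)) * π / 2 ^ 0 := by ring
      rw [hy] at h2
      have := (glt 0).mp h2
      exact_mod_cast this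
    have hq : q = p + 1 := by omega
    exact build 0 p x y hx (by rw [hy, hq]; push_cast; ring)
  | succ v ih =>
    intro p q hx hy
    have hlt : p < q := by
      have := hxy; rw [hx, hy] at this; exact_mod_cast (glt (v+1)).mp this
    have hlt2 : q < p + 2 ^ (v+2) := by
      have h2 : y < ((p:ℝ) + 2 ^ (v+2)) * π / 2 ^ (v+1) := by
        rw [hx, two_pi (v+1)] at hxy2
        calc y < (p:ℝ) * π / 2 ^ (v+1) + (2 ^ (v+2) : ℝ) * π / 2 ^ (v+1) := hxy2
        _ = ((p:ℝ) + 2 ^ (v+2)) * π / 2 ^ (v+1) := by ring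
      rw [hy] at h2
      have := (glt (v+1)).mp h2
      have h3 : (q:ℝ) < ((p + 2 ^ (v+2) : ℤ) : ℝ) := by push_cast; linarith
      exact_mod_cast h3
    by_cases hpe : 2 ∣ p
    · by_cases hqe : 2 ∣ q
      · obtain ⟨p', rfl⟩ := hpe
        obtain ⟨q', rfl⟩ := hqe
        exact ih p' q' (by rw [hx, halve]) (by rw [hy, halve])
      · -- q odd
        obtain ⟨t, rfl⟩ := Int.not_even_iff_odd.mp (fun he => hqe he.two_dvd)
        by_cases hd1 : 2 * t + 1 = p + 1
        · exact build (v+1) p x y hx (by rw [hy, hd1]; push_cast; ring)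
        by_cases hd2 : 2 * t + 1 = p + 2 ^ (v+2) - 1
        · refine build2 (v+1) (2 * t + 1) x y hy ?_
          rw [hx, two_pi (v+1)]
          have : ((2 * t + 1 : ℤ):ℝ) + 1 = (p:ℝ) + 2 ^ (v+2) := by
            have : (2 * t + 1 : ℤ) + 1 = p + 2 ^ (v+2) := by omega
            exact_mod_cast this
          rw [this]; push_cast; ring
        · exfalso
          have hd3 : p + 2 ≤ 2 * t + 1 := by omega
          have hd4 : 2 * t + 1 ≤ p + 2 ^ (v+2) - 2 := by omega
          have hd3R : (p:ℝ) + 2 ≤ 2 * (t:ℝ) + 1 := by exact_mod_cast hd3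
          have hd4R : 2 * (t:ℝ) + 1 ≤ (p:ℝ) + 2 ^ (v+2) - 2 := by exact_mod_cast hd4
          have hexp : ((t:ℝ)+1) * π / 2 ^ v = ((2 * t + 2 : ℤ):ℝ) * π / 2 ^ (v+1) := by
            rw [show (2 * t + 2 : ℤ) = 2 * (t + 1) by ring, halve]; push_cast; ring
          have g1 : (t:ℝ) * π / 2 ^ v < y := by
            rw [hy, ← halve v t]
            exact (glt (v+1)).mpr (by push_cast; linarith)
          have g2 : y < ((t:ℝ)+1) * π / 2 ^ v := by
            rw [hy, hexp]
            exact (glt (v+1)).mpr (by push_cast; linarith)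
          have g3 : ((t:ℝ)+1) * π / 2 ^ v < x + 2 * π := by
            rw [hx, hexp, two_pi (v+1)]
            have e : (p:ℝ) * π / 2 ^ (v+1) + (2 ^ (v+2):ℝ) * π / 2 ^ (v+1)
                = ((p:ℝ) + 2 ^ (v+2)) * π / 2 ^ (v+1) := by ring
            rw [e]
            have e3 : ((p:ℝ) + 2 ^ (v+2)) = ((p + 2 ^ (v+2) : ℤ):ℝ) := by push_cast; ring
            rw [e3]
            exact (glt (v+1)).mpr (by push_cast; linarith)
          have g4 : x + 2 * π < (t:ℝ) * π / 2 ^ v + 2 * π := by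
            have : x < (t:ℝ) * π / 2 ^ v := by
              rw [hx, ← halve v t]
              exact (glt (v+1)).mpr (by push_cast; linarith)
            linarith
          obtain ⟨m₀, hb, hcr⟩ := crosses_of v t y (x + 2 * π) g1 g2 g3 g4
          refine h v m₀ hb (crossesR_comm ?_)
          apply crossesR_shift 0 1
          push_cast
          simpa using hcr
    · -- p odd
      obtain ⟨s, rfl⟩ := Int.not_even_iff_odd.mp (fun he => hpe he.two_dvd)
      by_cases hd1 : q = 2 * s + 1 + 1
      · exact build (v+1) (2 * s + 1) x y hx (by rw [hy, hd1]; push_cast; ring)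
      by_cases hd2 : q = 2 * s + 1 + 2 ^ (v+2) - 1
      · refine build2 (v+1) q x y hy ?_
        rw [hx, two_pi (v+1)]
        have : ((q:ℤ):ℝ) + 1 = ((2 * s + 1 : ℤ):ℝ) + 2 ^ (v+2) := by
          have : (q:ℤ) + 1 = 2 * s + 1 + 2 ^ (v+2) := by omega
          exact_mod_cast this
        rw [this]; push_cast; ring
      · exfalso
        have hd3 : 2 * s + 1 + 2 ≤ q := by omega
        have hd4 : q ≤ 2 * s + 1 + 2 ^ (v+2) - 2 := by omega
        have hexp : ((s:ℝ)+1) * π / 2 ^ v = ((2 * s + 2 : ℤ):ℝ) * π / 2 ^ (v+1) := by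
          rw [show (2 * s + 2 : ℤ) = 2 * (s + 1) by ring, halve]; push_cast; ring
        have g1 : (s:ℝ) * π / 2 ^ v < x := by
          rw [hx, ← halve v s]
          exact (glt (v+1)).mpr (by push_cast; linarith)
        have g2 : x < ((s:ℝ)+1) * π / 2 ^ v := by
          rw [hx, hexp]
          exact (glt (v+1)).mpr (by push_cast; linarith)
        have g3 : ((s:ℝ)+1) * π / 2 ^ v < y := by
          rw [hy, hexp]
          have hd3' : (2 * s + 2 : ℤ) < q := by omega
          have hd3R : ((2 * s + 2 : ℤ):ℝ) < (q:ℝ) := by exact_mod_cast hd3'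
          exact (glt (v+1)).mpr hd3R
        have g4 : y < (s:ℝ) * π / 2 ^ v + 2 * π := by
          rw [hy, ← halve v s, two_pi v]
          have e : ((s:ℝ)) * π / 2 ^ v + (2 ^ (v+1):ℝ) * π / 2 ^ v
              = ((2 * s + 2 ^ (v+2) : ℤ):ℝ) * π / 2 ^ (v+1) := by
            rw [show (2 * s + 2 ^ (v+2) : ℤ) = 2 * (s + 2 ^ (v+1)) by ring, halve]
            push_cast; ring
          rw [halve, e]
          have hd4' : q < (2 * s + 2 ^ (v+2) : ℤ) := by omega
          have : (q:ℝ) < ((2 * s + 2 ^ (v+2) : ℤ):ℝ) := by exact_mod_cast hd4'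
          exact (glt (v+1)).mpr this
        obtain ⟨m₀, hb, hcr⟩ := crosses_of v s x y g1 g2 g3 g4
        exact h v m₀ hb hcr

end Stmt10Aux


/-- Maximality of the standard cluster T₀: any pair {x,y} of distinct points of S¹ that
is noncrossing with every dyadic pair (mπ/2ⁿ, (m+1)π/2ⁿ) of T₀ is itself such a dyadic
pair. -/
theorem stmt10 (x y : ℝ) (hxy : x < y) (hxy2 : y < x + 2 * π)
    (h : ∀ n m : ℕ, m < 2 ^ (n + 1) →
      ¬ CrossesR ((m : ℝ) * π / 2 ^ n) ((m + 1 : ℝ) * π / 2 ^ n) x y) :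
    ∃ n m : ℕ, m < 2 ^ (n + 1) ∧
      SameChord ((m : ℝ) * π / 2 ^ n) ((m + 1 : ℝ) * π / 2 ^ n) x y := by
  obtain ⟨n1, p1, hx⟩ := Stmt10Aux.dyadic_x x y hxy hxy2 h
  obtain ⟨n2, q2, hy⟩ := Stmt10Aux.dyadic_y x y hxy hxy2 h
  exact Stmt10Aux.main_ind x y hxy hxy2 h (max n1 n2)
    (p1 * 2 ^ (max n1 n2 - n1)) (q2 * 2 ^ (max n1 n2 - n2))
    (by rw [hx, Stmt10Aux.lift n1 _ (le_max_left n1 n2)])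
    (by rw [hy, Stmt10Aux.lift n2 _ (le_max_right n1 n2)])
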